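/- If ξ(x) < α for a state x of the product automaton, then there exists a finite event sequence s ∈ Σ_P^* such that δ_P(x, s) ∈ F_P, i.e., an accepting state is reachable from x. -/

import Mathlib

open scoped Classical

/-- Extended (partial) transition function on finite event sequences. -/
def runOf {X E : Type} (δ : X → E → Option X) : List E → X → Option X
  | [], x => some x
  | e :: s, x => (δ x e).bind (runOf δ s)

/-- A string consisting only of unobservable events. -/
def UOString {E : Type} (uo : E → Prop) (s : List E) : Prop := ∀ e ∈ s, uo e

/-- Natural projection erasing unobservable events. -/
noncomputable def proj {E : Type} (uo : E → Prop) (s : List E) : List E :=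
  s.filter (fun e => decide (¬ uo e))

/-- Legal control pattern: events with some strictly rank-decreasing occurrence
within the unobservable reach of `x`. -/
def gammaLeg {X E : Type} (δ : X → E → Option X) (uo : E → Prop)
    (ξ : X → ℕ) (x : X) : Set E :=
  {σ | ∃ s y z, UOString uo s ∧ runOf δ s x = some y ∧ δ y σ = some z ∧ ξ z < ξ y}

/-- Unobservable reach of `x` under control pattern `γ`. -/
def UR {X E : Type} (δ : X → E → Option X) (uo : E → Prop)
    (γ : Set E) (x : X) : Set X :=
  {x' | ∃ u : List E, (∀ e ∈ u, uo e ∧ e ∈ γ) ∧ runOf δ u x = some x'}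

/-- Membership in the next-state estimate `NS(s_o)` after observation `s_o`. -/
inductive NSmem {X E : Type} (δ : X → E → Option X) (uo : E → Prop)
    (x0 : X) : List E → X → Prop
  | init : NSmem δ uo x0 [] x0
  | step {so : List E} {x x' x'' : X} {σ : E} :
      NSmem δ uo x0 so x →
      x' ∈ UR δ uo Set.univ x →
      ¬ uo σ → δ x' σ = some x'' → NSmem δ uo x0 (so ++ [σ]) x''

/-- Joint legal control pattern of the state estimate. -/
def gammaLegNS {X E : Type} (δ : X → E → Option X) (uo : E → Prop) (ξ : X → ℕ)
    (x0 : X) (so : List E) : Set E :=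
  {σ | ∃ x, NSmem δ uo x0 so x ∧ σ ∈ gammaLeg δ uo ξ x}

/-- Permissive control pattern at state `x` and step `k`. -/
def gammaPer {X E : Type} (δ : X → E → Option X) (uo : E → Prop) (ξ : X → ℕ)
    (η : ℕ → ℝ) (x : X) (k : ℕ) : Set E :=
  {σ | ∀ s z, UOString uo s → runOf δ (s ++ [σ]) x = some z → (ξ z : ℝ) < η k}

/-- Joint permissive control pattern of the state estimate. -/
def gammaPerNS {X E : Type} (δ : X → E → Option X) (uo : E → Prop) (ξ : X → ℕ)
    (η : ℕ → ℝ) (x0 : X) (so : List E) (k : ℕ) : Set E :=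
  {σ | ∀ x, NSmem δ uo x0 so x → σ ∈ gammaPer δ uo ξ η x k}

/-- The on-line supervisor's control action after observation `so`. -/
def supAct {X E : Type} (δ : X → E → Option X) (uo : E → Prop) (ξ : X → ℕ)
    (η : ℕ → ℝ) (x0 : X) (so : List E) : Set E :=
  gammaLegNS δ uo ξ x0 so ∪ gammaPerNS δ uo ξ η x0 so so.length

/-- `ξ̂(x)`: min over controllable successors' ranks if no uncontrollable event
is defined at `x`, else max over uncontrollable successors' ranks. -/
noncomputable def hatXi {X E : Type} (δ : X → E → Option X) (uc : E → Prop)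
    (ξ : X → ℕ) (x : X) : ℕ :=
  if ∀ e, uc e → δ x e = none then
    sInf {n | ∃ e y, ¬ uc e ∧ δ x e = some y ∧ ξ y = n}
  else
    sSup {n | ∃ e y, uc e ∧ δ x e = some y ∧ ξ y = n}

/-- The update operator `up_α(r, x)`. -/
noncomputable def upA {X : Type} (α : ℕ) (F : Set X) (x : X) (r : ℕ) : ℕ :=
  if x ∉ F ∧ r < α then r + 1 else r

/-- Observability of the product automaton w.r.t. `ξ` and the projection. -/
def Observable {X E : Type} (δ : X → E → Option X) (uo : E → Prop)
    (ξ : X → ℕ) (x0 : X) : Prop :=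
  ∀ s s' : List E, ∀ σ : E,
    (runOf δ s x0).isSome → (runOf δ s' x0).isSome →
    proj uo s = proj uo s' →
    (∃ y z, runOf δ s x0 = some y ∧ δ y σ = some z ∧ ξ z < ξ y) →
    (runOf δ (s' ++ [σ]) x0).isSome →
    ∃ y z, runOf δ s' x0 = some y ∧ δ y σ = some z ∧ ξ z < ξ y

/-- The list of states visited along a run. -/
def visited {X E : Type} (δ : X → E → Option X) : List E → X → Option (List X)
  | [], x => some [x]
  | e :: s, x => (δ x e).bind fun y => (visited δ s y).map (fun l => x :: l)

/-- if `ξ(x) < α` then an accepting state is reachable from `x`. -/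
theorem stmt1 {X E : Type} [Fintype X] (δ : X → E → Option X) (uc : E → Prop)
    (F : Finset X)
    (hdf : ∀ x : X, ∃ e, (δ x e).isSome)
    (ξ : X → ℕ)
    (hfix : ∀ x, upA (Fintype.card X - F.card + 1) (↑F) x (hatXi δ uc ξ x) ≤ ξ x)
    (hleast : ∀ ξ' : X → ℕ,
      (∀ x, upA (Fintype.card X - F.card + 1) (↑F) x (hatXi δ uc ξ' x) ≤ ξ' x) →
      ∀ x, ξ x ≤ ξ' x) :
    ∀ x : X, ξ x < Fintype.card X - F.card + 1 →
      ∃ (s : List E) (y : X), runOf δ s x = some y ∧ y ∈ F := by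
  set α := Fintype.card X - F.card + 1 with hα
  -- key step: at a non-accepting state with ξ x < α, there is a rank-decreasing successor
  have step : ∀ x : X, x ∉ F → ξ x < α → ∃ e y, δ x e = some y ∧ ξ y < ξ x := by
    intro x hxF hxα
    have h := hfix x
    have hhat : hatXi δ uc ξ x < α := by
      by_contra hge
      push_neg at hge
      rw [upA, if_neg (by simp [Nat.not_lt.mpr hge])] at h
      omega
    rw [upA, if_pos ⟨by simpa using hxF, hhat⟩] at h
    have hlt : hatXi δ uc ξ x < ξ x := by omega
    by_cases h1 : ∀ e, uc e → δ x e = none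
    · rw [hatXi, if_pos h1] at hlt
      have hne : {n | ∃ e y, ¬ uc e ∧ δ x e = some y ∧ ξ y = n}.Nonempty := by
        obtain ⟨e, he⟩ := hdf x
        obtain ⟨y, hy⟩ := Option.isSome_iff_exists.mp he
        refine ⟨ξ y, e, y, ?_, hy, rfl⟩
        intro huc
        rw [h1 e huc] at hy; cases hy
      obtain ⟨e, y, _, hey, hξy⟩ := Nat.sInf_mem hne
      exact ⟨e, y, hey, by omega⟩
    · rw [hatXi, if_neg h1] at hlt
      push_neg at h1
      obtain ⟨e, huce, hne⟩ := h1
      have hney : {n | ∃ e y, uc e ∧ δ x e = some y ∧ ξ y = n}.Nonempty := by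
        obtain ⟨y, hy⟩ := Option.ne_none_iff_exists'.mp hne
        exact ⟨ξ y, e, y, huce, hy, rfl⟩
      have hbdd : BddAbove {n | ∃ e y, uc e ∧ δ x e = some y ∧ ξ y = n} := by
        refine ⟨Finset.univ.sup ξ, ?_⟩
        rintro n ⟨e', y, _, _, rfl⟩
        exact Finset.le_sup (Finset.mem_univ y)
      obtain ⟨e', y, _, hey, hξy⟩ := Nat.sSup_mem hney hbdd
      exact ⟨e', y, hey, by omega⟩
  -- strong induction on ξ x
  have main : ∀ n, ∀ x : X, ξ x ≤ n → ξ x < α →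
      ∃ (s : List E) (y : X), runOf δ s x = some y ∧ y ∈ F := by
    intro n
    induction n with
    | zero =>
      intro x hx0 hxα
      by_cases hxF : x ∈ F
      · exact ⟨[], x, rfl, hxF⟩
      · obtain ⟨e, y, _, hy⟩ := step x hxF hxα
        omega
    | succ n ih =>
      intro x hxn hxα
      by_cases hxF : x ∈ F
      · exact ⟨[], x, rfl, hxF⟩
      · obtain ⟨e, y, hey, hy⟩ := step x hxF hxα
        obtain ⟨s, z, hs, hz⟩ := ih y (by omega) (by omega)
        exact ⟨e :: s, z, by simp [runOf, hey, hs], hz⟩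
  intro x hx
  exact main (ξ x) x le_rfl hx
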